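/- Variational inequality: let X be a compact metrizable space with its Borel σ-algebra, S ⊆ X^∞ an arbitrary subset, and μ a stationary (shift-invariant) Borel probability measure on X^∞ with supp(μ) ⊆ S. Then H^sd(μ) ≤ H^t(S), where H^t(S) is the topological entropy of S. -/

import Mathlib

open MeasureTheory Filter
open scoped NNReal ENNReal

/-- `phi x = x * log x` (with `phi 0 = 0` since `Real.log 0 = 0`). -/
noncomputable def phi (x : ℝ) : ℝ := x * Real.log x

/-- Shannon entropy of a finite indexed family of sets w.r.t. a measure. -/
noncomputable def partEnt {Ω : Type*} [MeasurableSpace Ω] (μ : Measure Ω)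
    {ι : Type*} [Fintype ι] (A : ι → Set Ω) : ℝ :=
  -∑ i, phi ((μ (A i)).toReal)

/-- A finite measurable partition, given as an indexed family. -/
structure IsPartition {Ω : Type*} [MeasurableSpace Ω] {ι : Type*} (A : ι → Set Ω) : Prop where
  meas : ∀ i, MeasurableSet (A i)
  disj : Pairwise (Function.onFun Disjoint A)
  cover : (⋃ i, A i) = Set.univ

/-- The length-`n` cylinder partition `𝒫̄^n` of `X^∞` built from the family `A`. -/
def cyl {X ι : Type*} (A : ι → Set X) (n : ℕ) (w : Fin n → ι) : Set (ℕ → X) :=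
  {x | ∀ i : Fin n, x i ∈ A (w i)}

/-- Stochastic dynamical entropy of `μ` relative to a partition of `X`. -/
noncomputable def HsdP {X : Type*} [MeasurableSpace X] (μ : Measure (ℕ → X))
    {ι : Type*} [Fintype ι] (A : ι → Set X) : EReal :=
  limsup (fun n : ℕ => ((partEnt μ (cyl A n) / n : ℝ) : EReal)) atTop

/-- Stochastic dynamical entropy of `μ`. -/
noncomputable def Hsd {X : Type*} [MeasurableSpace X] (μ : Measure (ℕ → X)) : EReal :=
  ⨆ (k : ℕ) (A : Fin k → Set X) (_ : IsPartition A), HsdP μ A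

/-- The dynamical join `∨_{i=0}^{n-1} T^{-i} 𝒜`. -/
def dynJoin {Ω ι : Type*} (T : Ω → Ω) (A : ι → Set Ω) (n : ℕ) (w : Fin n → ι) : Set Ω :=
  {x | ∀ i : Fin n, T^[i] x ∈ A (w i)}

/-- Kolmogorov–Sinai entropy of `T` w.r.t. `ν` and a partition. -/
noncomputable def ksEntP {Ω : Type*} [MeasurableSpace Ω] (T : Ω → Ω) (ν : Measure Ω)
    {ι : Type*} [Fintype ι] (A : ι → Set Ω) : EReal :=
  limsup (fun n : ℕ => ((partEnt ν (dynJoin T A n) / n : ℝ) : EReal)) atTop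

/-- Kolmogorov–Sinai entropy of `T` w.r.t. `ν`. -/
noncomputable def ksEnt {Ω : Type*} [MeasurableSpace Ω] (T : Ω → Ω) (ν : Measure Ω) : EReal :=
  ⨆ (k : ℕ) (A : Fin k → Set Ω) (_ : IsPartition A), ksEntP T ν A

/-- The shift on the path space `X^∞`. -/
def shift {X : Type*} : (ℕ → X) → (ℕ → X) := fun x n => x (n + 1)

/-- Minimal number of length-`n` cylinders built from members of `U` needed to cover `S`. -/
noncomputable def coverNum {X : Type*} (S : Set (ℕ → X)) (U : Set (Set X)) (n : ℕ) : ℕ :=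
  sInf {m | ∃ F : Finset (Fin n → Set X), F.card = m ∧ (∀ w ∈ F, ∀ i, w i ∈ U) ∧
    S ⊆ ⋃ w ∈ F, {x : ℕ → X | ∀ i : Fin n, x i ∈ w i}}

/-- Topological entropy `H^t(S)` of an arbitrary subset `S ⊆ X^∞`. -/
noncomputable def Htop {X : Type*} [TopologicalSpace X] (S : Set (ℕ → X)) : EReal :=
  ⨆ (U : Set (Set X)) (_ : (∀ u ∈ U, IsOpen u) ∧ ⋃₀ U = Set.univ),
    limsup (fun n : ℕ => ((Real.log (coverNum S U n) / n : ℝ) : EReal)) atTop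

set_option maxHeartbeats 1000000

section
lemma phi_zero : phi 0 = 0 := by simp [phi]
lemma phi_one : phi 1 = 0 := by simp [phi]

lemma sum_phi_le_phi_sum {ι : Type*} (s : Finset ι) (x : ι → ℝ) (hx : ∀ i ∈ s, 0 ≤ x i) :
    ∑ i ∈ s, phi (x i) ≤ phi (∑ i ∈ s, x i) := by
  have h : ∀ i ∈ s, phi (x i) ≤ x i * Real.log (∑ j ∈ s, x j) := by
    intro i hi
    rcases (hx i hi).eq_or_lt with h0 | h0
    · simp [phi, ← h0]
    · exact mul_le_mul_of_nonneg_left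
        (Real.log_le_log h0 (Finset.single_le_sum hx hi)) (hx i hi)
  calc ∑ i ∈ s, phi (x i) ≤ ∑ i ∈ s, x i * Real.log (∑ j ∈ s, x j) := Finset.sum_le_sum h
  _ = phi (∑ i ∈ s, x i) := by simp only [phi]; rw [Finset.sum_mul]

lemma sum_mul_log_div_le {ι : Type*} (s : Finset ι) (p q : ι → ℝ)
    (hp : ∀ i ∈ s, 0 ≤ p i) (hq : ∀ i ∈ s, 0 ≤ q i)
    (hpq : ∀ i ∈ s, p i ≠ 0 → q i ≠ 0) :
    ∑ i ∈ s, p i * Real.log (q i / p i) ≤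
      (∑ i ∈ s, p i) * Real.log ((∑ i ∈ s, q i) / (∑ i ∈ s, p i)) := by
  rcases (Finset.sum_nonneg hp).eq_or_lt with hP | hP
  · have hz : ∀ i ∈ s, p i = 0 :=
      (Finset.sum_eq_zero_iff_of_nonneg hp).mp hP.symm
    have h1 : ∑ i ∈ s, p i * Real.log (q i / p i) = 0 :=
      Finset.sum_eq_zero fun i hi => by rw [hz i hi, zero_mul]
    rw [h1, ← hP, zero_mul]
  · set P := ∑ i ∈ s, p i with hPdef
    have hQ : 0 < ∑ i ∈ s, q i := by
      obtain ⟨i, hi, hpi⟩ : ∃ i ∈ s, 0 < p i := by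
        by_contra h; push_neg at h
        exact absurd (Finset.sum_nonpos fun i hi => h i hi) (not_le.mpr hP)
      have hqi : 0 < q i := (hq i hi).lt_of_ne' (hpq i hi hpi.ne')
      exact hqi.trans_le (Finset.single_le_sum hq hi)
    set Q := ∑ i ∈ s, q i with hQdef
    have key : ∀ i ∈ s, p i * Real.log (q i / p i) ≤
        p i * Real.log (Q / P) + (q i * (P / Q) - p i) := by
      intro i hi
      rcases (hp i hi).eq_or_lt with h0 | h0
      · rw [← h0]
        have : 0 ≤ q i * (P / Q) := mul_nonneg (hq i hi) (by positivity)
        simpa using this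
      · have hqi : 0 < q i := (hq i hi).lt_of_ne' (hpq i hi h0.ne')
        have hr : 0 < q i * P / (p i * Q) := by positivity
        have hprod : Q / P * (q i * P / (p i * Q)) = q i / p i := by
          field_simp
        have hlog : Real.log (q i / p i) =
            Real.log (Q / P) + Real.log (q i * P / (p i * Q)) := by
          rw [← hprod, Real.log_mul (by positivity) (by positivity)]
        have hle := Real.log_le_sub_one_of_pos hr
        have h2 : p i * Real.log (q i * P / (p i * Q)) ≤ q i * (P / Q) - p i := by
          have := mul_le_mul_of_nonneg_left hle h0.le
          have hid : p i * (q i * P / (p i * Q) - 1) = q i * (P / Q) - p i := by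
            field_simp
          linarith [hid ▸ this]
        calc p i * Real.log (q i / p i)
            = p i * Real.log (Q / P) + p i * Real.log (q i * P / (p i * Q)) := by
              rw [hlog]; ring
          _ ≤ p i * Real.log (Q / P) + (q i * (P / Q) - p i) := by linarith
    calc ∑ i ∈ s, p i * Real.log (q i / p i)
        ≤ ∑ i ∈ s, (p i * Real.log (Q / P) + (q i * (P / Q) - p i)) := Finset.sum_le_sum key
      _ = P * Real.log (Q / P) + (Q * (P / Q) - P) := by
          rw [Finset.sum_add_distrib, Finset.sum_sub_distrib, ← Finset.sum_mul, ← Finset.sum_mul]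
      _ = P * Real.log (Q / P) := by field_simp; ring

lemma sum_neg_phi_le {ι : Type*} (s s' : Finset ι) (hsub : s' ⊆ s) (x : ι → ℝ)
    (hx : ∀ i ∈ s, 0 ≤ x i) (hzero : ∀ i ∈ s, i ∉ s' → x i = 0)
    (m : ℝ) (hm : 1 ≤ m) (hc : (s'.card : ℝ) ≤ m) :
    ∑ i ∈ s, -phi (x i) ≤ -phi (∑ i ∈ s, x i) + (∑ i ∈ s, x i) * Real.log m := by
  have hxeq : ∑ i ∈ s, x i = ∑ i ∈ s', x i :=
    (Finset.sum_subset hsub (fun i hi hni => hzero i hi hni)).symm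
  have hphieq : ∑ i ∈ s, -phi (x i) = ∑ i ∈ s', -phi (x i) :=
    (Finset.sum_subset hsub (fun i hi hni => by rw [hzero i hi hni]; simp [phi])).symm
  rw [hxeq, hphieq]
  have hx' : ∀ i ∈ s', 0 ≤ x i := fun i hi => hx i (hsub hi)
  have hls := sum_mul_log_div_le s' x (fun _ => (1:ℝ)) hx'
      (fun _ _ => zero_le_one) (fun _ _ _ => one_ne_zero)
  have hterm : ∀ i ∈ s', x i * Real.log (1 / x i) = -phi (x i) := by
    intro i _; rw [one_div, Real.log_inv]; simp only [phi]; ring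
  rw [Finset.sum_congr rfl hterm, Finset.sum_const, nsmul_eq_mul, mul_one] at hls
  set P := ∑ i ∈ s', x i with hP
  rcases (Finset.sum_nonneg hx').eq_or_lt with h0 | h0
  · have hall : ∀ i ∈ s', x i = 0 := (Finset.sum_eq_zero_iff_of_nonneg hx').mp h0.symm
    have h1 : ∑ i ∈ s', -phi (x i) = 0 :=
      Finset.sum_eq_zero fun i hi => by rw [hall i hi]; simp [phi]
    have hP0 : P = 0 := by rw [hP, ← h0]
    rw [h1, hP0]
    simp [phi]
  · have hne : s'.Nonempty := Finset.nonempty_of_sum_ne_zero (f := x) h0.ne'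
    have hcard : (0:ℝ) < s'.card := by exact_mod_cast Finset.card_pos.mpr hne
    have hlogd : Real.log ((s'.card : ℝ) / P) = Real.log (s'.card : ℝ) - Real.log P :=
      Real.log_div hcard.ne' h0.ne'
    have h2 : P * Real.log ((s'.card : ℝ) / P) ≤ -phi P + P * Real.log m := by
      rw [hlogd]
      have : P * Real.log (s'.card : ℝ) ≤ P * Real.log m :=
        mul_le_mul_of_nonneg_left (Real.log_le_log hcard hc) h0.le
      simp only [phi]
      nlinarith
    exact hls.trans h2

lemma join_neg_phi {ι κ : Type*} [Fintype ι] [Fintype κ] (M : ι → κ → ℝ)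
    (hM : ∀ i j, 0 ≤ M i j) (htot : ∑ i, ∑ j, M i j = 1) :
    ∑ i, ∑ j, -phi (M i j) ≤ (∑ i, -phi (∑ j, M i j)) + ∑ j, -phi (∑ i, M i j) := by
  classical
  set a : ι → ℝ := fun i => ∑ j, M i j with ha
  set b : κ → ℝ := fun j => ∑ i, M i j with hb
  have ha0 : ∀ i, 0 ≤ a i := fun i => Finset.sum_nonneg fun j _ => hM i j
  have hb0 : ∀ j, 0 ≤ b j := fun j => Finset.sum_nonneg fun i _ => hM i j
  have hsa : ∑ i, a i = 1 := htot
  have hsb : ∑ j, b j = 1 := by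
    rw [hb] at *
    rw [show ∑ j, ∑ i, M i j = ∑ i, ∑ j, M i j from Finset.sum_comm]
    exact htot
  have hls := sum_mul_log_div_le (Finset.univ : Finset (ι × κ))
      (fun p => M p.1 p.2) (fun p => a p.1 * b p.2)
      (fun p _ => hM _ _) (fun p _ => mul_nonneg (ha0 _) (hb0 _))
      (fun p _ hne => mul_ne_zero
        (((hM p.1 p.2).lt_of_ne' hne).trans_le (Finset.single_le_sum (fun j _ => hM p.1 j) (Finset.mem_univ p.2))).ne'
        (((hM p.1 p.2).lt_of_ne' hne).trans_le (Finset.single_le_sum (fun i _ => hM i p.2) (Finset.mem_univ p.1))).ne')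
  have hsump : ∑ p : ι × κ, M p.1 p.2 = 1 := by
    rw [Fintype.sum_prod_type]; exact htot
  have hsumq : ∑ p : ι × κ, a p.1 * b p.2 = 1 := by
    rw [Fintype.sum_prod_type]
    calc ∑ i, ∑ j, a i * b j = ∑ i, a i * ∑ j, b j := by
          refine Finset.sum_congr rfl fun i _ => ?_
          rw [Finset.mul_sum]
      _ = 1 := by rw [hsb]; simp [hsa]
  rw [hsump, hsumq] at hls
  norm_num at hls
  -- hls : ∑ p, M p.1 p.2 * log (a p.1 * b p.2 / M p.1 p.2) ≤ 0
  have hterm : ∀ p : ι × κ, M p.1 p.2 * Real.log (a p.1 * b p.2 / M p.1 p.2)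
      = M p.1 p.2 * Real.log (a p.1) + M p.1 p.2 * Real.log (b p.2) - phi (M p.1 p.2) := by
    intro p
    rcases eq_or_ne (M p.1 p.2) 0 with h0 | h0
    · rw [h0]; simp [phi]
    · have hMpos : 0 < M p.1 p.2 := (hM _ _).lt_of_ne' h0
      have hapos : 0 < a p.1 := hMpos.trans_le (Finset.single_le_sum (fun j _ => hM p.1 j) (Finset.mem_univ p.2))
      have hbpos : 0 < b p.2 := hMpos.trans_le (Finset.single_le_sum (fun i _ => hM i p.2) (Finset.mem_univ p.1))
      rw [Real.log_div (mul_ne_zero hapos.ne' hbpos.ne') h0, Real.log_mul hapos.ne' hbpos.ne']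
      simp only [phi]; ring
  rw [Finset.sum_congr rfl (fun p _ => hterm p)] at hls
  have e1 : ∑ p : ι × κ, M p.1 p.2 * Real.log (a p.1) = ∑ i, phi (a i) := by
    rw [Fintype.sum_prod_type]
    refine Finset.sum_congr rfl fun i _ => ?_
    show ∑ y, M i y * Real.log (a i) = phi (a i)
    rw [← Finset.sum_mul]; rfl
  have e2 : ∑ p : ι × κ, M p.1 p.2 * Real.log (b p.2) = ∑ j, phi (b j) := by
    rw [Fintype.sum_prod_type, Finset.sum_comm]
    refine Finset.sum_congr rfl fun j _ => ?_
    show ∑ x, M x j * Real.log (b j) = phi (b j)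
    rw [← Finset.sum_mul]; rfl
  rw [Finset.sum_sub_distrib, Finset.sum_add_distrib, e1, e2] at hls
  have e3 : ∑ p : ι × κ, phi (M p.1 p.2) = ∑ i, ∑ j, phi (M i j) := Fintype.sum_prod_type _
  rw [e3] at hls
  have goal1 : ∑ i, ∑ j, -phi (M i j) = -∑ i, ∑ j, phi (M i j) := by
    simp [Finset.sum_neg_distrib]
  have goal2 : (∑ i, -phi (a i)) = -∑ i, phi (a i) := by simp [Finset.sum_neg_distrib]
  have goal3 : (∑ j, -phi (b j)) = -∑ j, phi (b j) := by simp [Finset.sum_neg_distrib]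
  rw [goal1, goal2, goal3]
  linarith

section MeasureLemmas
variable {Ω : Type*} [MeasurableSpace Ω] (μ : Measure Ω)

lemma meas_toReal_biUnion [IsFiniteMeasure μ] {ι : Type*} (s : Finset ι) (t : ι → Set Ω)
    (hm : ∀ i ∈ s, MeasurableSet (t i)) (hd : Set.Pairwise ↑s (Function.onFun Disjoint t)) :
    (μ (⋃ i ∈ s, t i)).toReal = ∑ i ∈ s, (μ (t i)).toReal := by
  rw [measure_biUnion_finset hd hm, ENNReal.toReal_sum (fun i _ => measure_ne_top μ _)]

lemma partition_sum_one [IsProbabilityMeasure μ] {ι : Type*} [Fintype ι]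
    (A : ι → Set Ω) (hA : IsPartition A) :
    ∑ i, (μ (A i)).toReal = 1 := by
  rw [← meas_toReal_biUnion μ Finset.univ A (fun i _ => hA.meas i)
      (fun i _ j _ hne => hA.disj hne)]
  have h : (⋃ i ∈ (Finset.univ : Finset ι), A i) = ⋃ i, A i := by simp
  rw [h, hA.cover, measure_univ, ENNReal.toReal_one]

lemma partEnt_le_refine [IsFiniteMeasure μ] {ι ι' : Type*} [Fintype ι] [Fintype ι']
    [DecidableEq ι] (A : ι → Set Ω) (B : ι' → Set Ω) (f : ι' → ι)
    (h : ∀ i, (μ (A i)).toReal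
        = ∑ j ∈ Finset.univ.filter (fun j => f j = i), (μ (B j)).toReal) :
    partEnt μ A ≤ partEnt μ B := by
  unfold partEnt
  rw [neg_le_neg_iff]
  calc ∑ j, phi ((μ (B j)).toReal)
      = ∑ i, ∑ j ∈ Finset.univ.filter (fun j => f j = i), phi ((μ (B j)).toReal) :=
        (Finset.sum_fiberwise _ f _).symm
    _ ≤ ∑ i, phi ((μ (A i)).toReal) := Finset.sum_le_sum fun i _ => by
        rw [h i]; exact sum_phi_le_phi_sum _ _ fun j _ => ENNReal.toReal_nonneg

lemma partEnt_le_count [IsFiniteMeasure μ] {ι' κ : Type*} [Fintype ι'] [Fintype κ]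
    [DecidableEq κ] (B : ι' → Set Ω) (C : κ → Set Ω) (g : ι' → κ) (m : κ → ℝ)
    (hm : ∀ c, 1 ≤ m c)
    (h : ∀ c, (μ (C c)).toReal
        = ∑ j ∈ Finset.univ.filter (fun j => g j = c), (μ (B j)).toReal)
    (hcount : ∀ c, ∃ s' : Finset ι', s' ⊆ Finset.univ.filter (fun j => g j = c) ∧
        (∀ j, g j = c → (μ (B j)).toReal ≠ 0 → j ∈ s') ∧ ((s'.card : ℝ) ≤ m c)) :
    partEnt μ B ≤ partEnt μ C + ∑ c, (μ (C c)).toReal * Real.log (m c) := by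
  have key : ∀ c : κ, ∑ j ∈ Finset.univ.filter (fun j => g j = c), -phi ((μ (B j)).toReal)
      ≤ -phi ((μ (C c)).toReal) + (μ (C c)).toReal * Real.log (m c) := by
    intro c
    obtain ⟨s', hsub, hmem, hcard⟩ := hcount c
    have hz : ∀ j ∈ Finset.univ.filter (fun j => g j = c), j ∉ s' → (μ (B j)).toReal = 0 := by
      intro j hj hj'
      by_contra hne
      exact hj' (hmem j (Finset.mem_filter.mp hj).2 hne)
    have := sum_neg_phi_le (Finset.univ.filter (fun j => g j = c)) s' hsub
      (fun j => (μ (B j)).toReal) (fun j _ => ENNReal.toReal_nonneg) hz (m c) (hm c) hcard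
    rw [← h c] at this
    exact this
  have e1 : partEnt μ B = ∑ c, ∑ j ∈ Finset.univ.filter (fun j => g j = c),
      -phi ((μ (B j)).toReal) := by
    unfold partEnt
    rw [← Finset.sum_neg_distrib, (Finset.sum_fiberwise _ g _)]
  rw [e1]
  calc ∑ c, ∑ j ∈ Finset.univ.filter (fun j => g j = c), -phi ((μ (B j)).toReal)
      ≤ ∑ c, (-phi ((μ (C c)).toReal) + (μ (C c)).toReal * Real.log (m c)) :=
        Finset.sum_le_sum fun c _ => key c
    _ = partEnt μ C + ∑ c, (μ (C c)).toReal * Real.log (m c) := by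
        rw [Finset.sum_add_distrib]
        unfold partEnt
        rw [← Finset.sum_neg_distrib]

lemma partEnt_join_le [IsProbabilityMeasure μ] {ι κ : Type*} [Fintype ι] [Fintype κ]
    (A : ι → Set Ω) (B : κ → Set Ω) (hA : IsPartition A) (hB : IsPartition B) :
    partEnt μ (fun p : ι × κ => A p.1 ∩ B p.2) ≤ partEnt μ A + partEnt μ B := by
  classical
  set M : ι → κ → ℝ := fun i j => (μ (A i ∩ B j)).toReal with hMdef
  have hM0 : ∀ i j, 0 ≤ M i j := fun _ _ => ENNReal.toReal_nonneg
  have hrow : ∀ i, (μ (A i)).toReal = ∑ j, M i j := by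
    intro i
    have hset : A i = ⋃ j ∈ (Finset.univ : Finset κ), A i ∩ B j := by
      have : (⋃ j ∈ (Finset.univ : Finset κ), A i ∩ B j) = ⋃ j, A i ∩ B j := by simp
      rw [this, ← Set.inter_iUnion, hB.cover, Set.inter_univ]
    rw [hset, meas_toReal_biUnion μ Finset.univ _
      (fun j _ => (hA.meas i).inter (hB.meas j))
      (fun j _ j' _ hne => ((hB.disj hne).mono (Set.inter_subset_right) (Set.inter_subset_right)))]
  have hcol : ∀ j, (μ (B j)).toReal = ∑ i, M i j := by
    intro j
    have hset : B j = ⋃ i ∈ (Finset.univ : Finset ι), A i ∩ B j := by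
      have : (⋃ i ∈ (Finset.univ : Finset ι), A i ∩ B j) = ⋃ i, A i ∩ B j := by simp
      rw [this, ← Set.iUnion_inter, hA.cover, Set.univ_inter]
    rw [hset, meas_toReal_biUnion μ Finset.univ _
      (fun i _ => (hA.meas i).inter (hB.meas j))
      (fun i _ i' _ hne => ((hA.disj hne).mono (Set.inter_subset_left) (Set.inter_subset_left)))]
  have htot : ∑ i, ∑ j, M i j = 1 := by
    rw [Finset.sum_congr rfl (fun i _ => (hrow i).symm)]
    exact partition_sum_one μ A hA
  have hjoin := join_neg_phi M hM0 htot
  have eA : ∑ i, -phi (∑ j, M i j) = partEnt μ A := by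
    unfold partEnt
    rw [← Finset.sum_neg_distrib]
    exact Finset.sum_congr rfl fun i _ => by rw [← hrow i]
  have eB : ∑ j, -phi (∑ i, M i j) = partEnt μ B := by
    unfold partEnt
    rw [← Finset.sum_neg_distrib]
    exact Finset.sum_congr rfl fun j _ => by rw [← hcol j]
  have eJ : partEnt μ (fun p : ι × κ => A p.1 ∩ B p.2) = ∑ i, ∑ j, -phi (M i j) := by
    unfold partEnt
    rw [← Finset.sum_neg_distrib, Fintype.sum_prod_type]
  rw [eJ, ← eA, ← eB]
  exact hjoin

lemma IsPartition.preimage {Ω' : Type*} [MeasurableSpace Ω'] {ι : Type*} {A : ι → Set Ω}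
    (hA : IsPartition A) {g : Ω' → Ω} (hg : Measurable g) :
    IsPartition (fun i => g ⁻¹' A i) :=
  ⟨fun i => hg (hA.meas i), fun _ _ hne => (hA.disj hne).preimage g,
   by rw [← Set.preimage_iUnion, hA.cover, Set.preimage_univ]⟩

end MeasureLemmas

section Cyl
variable {X : Type*} [MeasurableSpace X]

lemma cyl_eq {ι : Type*} (A : ι → Set X) (n : ℕ) (w : Fin n → ι) :
    cyl A n w = ⋂ i : Fin n, (fun x : ℕ → X => x i) ⁻¹' A (w i) := by
  ext x; simp [cyl]

lemma measurable_cyl {ι : Type*} {A : ι → Set X} (hA : ∀ i, MeasurableSet (A i))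
    (n : ℕ) (w : Fin n → ι) : MeasurableSet (cyl A n w) := by
  rw [cyl_eq]
  exact MeasurableSet.iInter fun i => measurable_pi_apply (i : ℕ) (hA (w i))

lemma cyl_disjoint {ι : Type*} {A : ι → Set X} (hd : Pairwise (Function.onFun Disjoint A))
    (n : ℕ) : Pairwise (Function.onFun Disjoint (cyl A n)) := by
  intro w w' hne
  obtain ⟨i, hi⟩ := Function.ne_iff.mp hne
  exact Set.disjoint_left.mpr fun x hx hx' =>
    Set.disjoint_left.mp (hd hi) (hx i) (hx' i)

lemma cyl_cover {ι : Type*} {A : ι → Set X} (hc : (⋃ i, A i) = Set.univ) (n : ℕ) :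
    (⋃ w : Fin n → ι, cyl A n w) = Set.univ := by
  ext x
  simp only [Set.mem_iUnion, Set.mem_univ, iff_true]
  have h : ∀ i : Fin n, ∃ j, x (i : ℕ) ∈ A j := fun i =>
    Set.mem_iUnion.mp (hc ▸ Set.mem_univ (x (i : ℕ)))
  choose w hw using h
  exact ⟨w, fun i => hw i⟩

lemma cyl_partition {ι : Type*} {A : ι → Set X} (hA : IsPartition A) (n : ℕ) :
    IsPartition (cyl A n) :=
  ⟨measurable_cyl hA.meas n, cyl_disjoint hA.disj n, cyl_cover hA.cover n⟩

lemma cyl_fiber_union {ι ι' : Type*} [Fintype ι'] [DecidableEq ι] [DecidableEq ι']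
    (f : ι' → ι) (A : ι → Set X) (B : ι' → Set X)
    (hsub : ∀ j, B j ⊆ A (f j)) (hex : ∀ i x, x ∈ A i → ∃ j, f j = i ∧ x ∈ B j)
    (n : ℕ) (w : Fin n → ι) :
    cyl A n w = ⋃ w' ∈ Finset.univ.filter (fun w' : Fin n → ι' => f ∘ w' = w), cyl B n w' := by
  ext x
  simp only [Set.mem_iUnion, Finset.mem_filter, Finset.mem_univ, true_and, exists_prop]
  constructor
  · intro hx
    have h : ∀ i : Fin n, ∃ j, f j = w i ∧ x (i : ℕ) ∈ B j := fun i => hex (w i) _ (hx i)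
    choose w' h1 h2 using h
    exact ⟨w', funext h1, fun i => h2 i⟩
  · rintro ⟨w', hfw, hx⟩ i
    have h := hsub (w' i) (hx i)
    rwa [show f (w' i) = w i from congrFun hfw i] at h

lemma cyl_toReal_fiber {ι ι' : Type*} [Fintype ι'] [DecidableEq ι] [DecidableEq ι']
    (μ : Measure (ℕ → X)) [IsFiniteMeasure μ]
    (f : ι' → ι) (A : ι → Set X) (B : ι' → Set X)
    (hBm : ∀ j, MeasurableSet (B j)) (hBd : Pairwise (Function.onFun Disjoint B))
    (hsub : ∀ j, B j ⊆ A (f j)) (hex : ∀ i x, x ∈ A i → ∃ j, f j = i ∧ x ∈ B j)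
    (n : ℕ) (w : Fin n → ι) :
    (μ (cyl A n w)).toReal =
      ∑ w' ∈ Finset.univ.filter (fun w' : Fin n → ι' => f ∘ w' = w),
        (μ (cyl B n w')).toReal := by
  rw [cyl_fiber_union f A B hsub hex n w]
  rw [measure_biUnion_finset
    (fun w1 h1 w2 h2 hne => cyl_disjoint hBd n hne)
    (fun w' _ => measurable_cyl hBm n w'),
    ENNReal.toReal_sum (fun i _ => measure_ne_top μ _)]

lemma measurable_shift : Measurable (shift : (ℕ → X) → ℕ → X) :=
  measurable_pi_lambda _ fun n => measurable_pi_apply (n + 1)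

lemma measurable_shift_iter (i : ℕ) : Measurable (shift^[i] : (ℕ → X) → ℕ → X) := by
  induction i with
  | zero => simpa using measurable_id
  | succ m ih =>
    rw [Function.iterate_succ']
    exact measurable_shift.comp ih

lemma shift_iter_apply {Y : Type*} (i : ℕ) (x : ℕ → Y) (n : ℕ) :
    (shift^[i]) x n = x (n + i) := by
  induction i generalizing x n with
  | zero => simp
  | succ m ih =>
    rw [Function.iterate_succ', Function.comp_apply]
    show (shift^[m] x) (n + 1) = x (n + (m + 1))
    rw [ih]
    congr 1
    omega

lemma map_shift_iter (μ : Measure (ℕ → X)) (hstat : Measure.map shift μ = μ) (i : ℕ) :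
    Measure.map (shift^[i]) μ = μ := by
  induction i with
  | zero => simp
  | succ m ih =>
    rw [Function.iterate_succ', ← Measure.map_map measurable_shift (measurable_shift_iter m),
      ih, hstat]

lemma measure_shift_preimage (μ : Measure (ℕ → X)) (hstat : Measure.map shift μ = μ)
    {s : Set (ℕ → X)} (hs : MeasurableSet s) :
    μ (shift ⁻¹' s) = μ s := by
  conv_rhs => rw [← hstat]
  rw [Measure.map_apply measurable_shift hs]

lemma measure_eval_preimage (μ : Measure (ℕ → X)) (hstat : Measure.map shift μ = μ)
    {B : Set X} (hB : MeasurableSet B) (i : ℕ) :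
    μ ((fun x : ℕ → X => x i) ⁻¹' B) = μ ((fun x : ℕ → X => x 0) ⁻¹' B) := by
  have h1 : ((fun x : ℕ → X => x i) ⁻¹' B)
      = (shift^[i]) ⁻¹' ((fun x : ℕ → X => x 0) ⁻¹' B) := by
    ext x
    simp [shift_iter_apply]
  rw [h1, ← Measure.map_apply (measurable_shift_iter i) ((measurable_pi_apply 0) hB),
    map_shift_iter μ hstat i]

lemma partEnt_cyl_le (μ : Measure (ℕ → X)) [IsProbabilityMeasure μ]
    (hstat : Measure.map shift μ = μ) {ι : Type*} [Fintype ι]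
    (ζ : ι → Set X) (hζ : IsPartition ζ) (n : ℕ) :
    partEnt μ (cyl ζ n) ≤ n * partEnt μ (fun b : ι => (fun x : ℕ → X => x 0) ⁻¹' ζ b) := by
  induction n with
  | zero =>
    have huniv : ∀ w : Fin 0 → ι, cyl ζ 0 w = Set.univ :=
      fun w => Set.eq_univ_of_forall (fun x i => i.elim0)
    unfold partEnt
    simp [huniv, phi]
  | succ n ih =>
    have hset : ∀ w : Fin (n+1) → ι, cyl ζ (n+1) w =
        ((fun x : ℕ → X => x 0) ⁻¹' ζ (w 0)) ∩ shift ⁻¹' (cyl ζ n (fun j => w j.succ)) := by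
      intro w
      ext x
      constructor
      · intro hx
        refine ⟨hx 0, fun j => ?_⟩
        have h := hx j.succ
        simpa [shift, Fin.val_succ] using h
      · rintro ⟨h0, hs⟩ i
        refine Fin.cases ?_ ?_ i
        · simpa using h0
        · intro j
          have h := hs j
          simpa [shift, Fin.val_succ] using h
    have hEnt : partEnt μ (cyl ζ (n+1)) =
        partEnt μ (fun p : ι × (Fin n → ι) =>
          ((fun x : ℕ → X => x 0) ⁻¹' ζ p.1) ∩ shift ⁻¹' (cyl ζ n p.2)) := by
      unfold partEnt
      congr 1
      refine Fintype.sum_equiv (Fin.consEquiv (fun _ => ι)).symm _ _ (fun w => ?_)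
      rw [hset w]
      rfl
    rw [hEnt]
    have hjoin := partEnt_join_le μ (fun b : ι => (fun x : ℕ → X => x 0) ⁻¹' ζ b)
        (fun w : Fin n → ι => shift ⁻¹' (cyl ζ n w))
        (hζ.preimage (measurable_pi_apply 0))
        ((cyl_partition hζ n).preimage measurable_shift)
    have hEq : partEnt μ (fun w : Fin n → ι => shift ⁻¹' (cyl ζ n w)) = partEnt μ (cyl ζ n) := by
      unfold partEnt
      congr 1
      refine Finset.sum_congr rfl fun w _ => ?_
      rw [measure_shift_preimage μ hstat (measurable_cyl hζ.meas n w)]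
    rw [hEq] at hjoin
    refine hjoin.trans ?_
    have := add_le_add_right ih (partEnt μ (fun b : ι => (fun x : ℕ → X => x 0) ⁻¹' ζ b))
    refine this.trans ?_
    push_cast
    ring_nf
    exact le_refl _

end Cyl

lemma ereal_le_of_forall_add_le {x y : EReal} (h : ∀ ε : ℝ, 0 < ε → x ≤ y + (ε : EReal)) :
    x ≤ y := by
  induction y with
  | bot =>
    have h1 := h 1 one_pos
    simpa using h1
  | coe r =>
    induction x with
    | bot => exact bot_le
    | coe s =>
      have h2 : ∀ ε : ℝ, 0 < ε → s ≤ r + ε := by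
        intro ε hε
        have := h ε hε
        rw [← EReal.coe_add] at this
        exact_mod_cast this
      exact_mod_cast le_of_forall_pos_le_add h2
    | top =>
      have h1 := h 1 one_pos
      rw [← EReal.coe_add] at h1
      exact absurd (top_le_iff.mp h1) (EReal.coe_ne_top _)
  | top => exact le_top

lemma ereal_limsup_add_const (g : ℕ → EReal) (c : ℝ) :
    limsup (fun n => g n + (c : EReal)) atTop ≤ limsup g atTop + (c : EReal) := by
  have h := EReal.limsup_add_le (u := g) (v := fun _ => (c : EReal)) (f := atTop)
    (Or.inr (by rw [limsup_const]; exact EReal.coe_ne_top c))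
    (Or.inr (by rw [limsup_const]; exact EReal.coe_ne_bot c))
  rw [limsup_const] at h
  exact h

lemma hsdp_le_htop {X : Type*} [TopologicalSpace X] [CompactSpace X]
    [TopologicalSpace.MetrizableSpace X] [MeasurableSpace X] [BorelSpace X]
    (μ : Measure (ℕ → X)) [IsProbabilityMeasure μ]
    (hstat : Measure.map shift μ = μ)
    (S : Set (ℕ → X))
    (hsupp : {x : ℕ → X | ∀ U : Set (ℕ → X), IsOpen U → x ∈ U → μ U ≠ 0} ⊆ S)
    {k : ℕ} (A : Fin k → Set X) (hA : IsPartition A) :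
    HsdP μ A ≤ Htop S := by
  classical
  letI : MetricSpace X := TopologicalSpace.metrizableSpaceMetric X
  -- X is nonempty
  have hΩne : Nonempty (ℕ → X) := by
    by_contra h
    have : (Set.univ : Set (ℕ → X)) = ∅ := by
      simp [Set.eq_empty_iff_forall_notMem]
      intro x
      exact h ⟨x⟩
    have h1 : μ Set.univ = 1 := measure_univ
    rw [this] at h1
    simp at h1
  have hXne : Nonempty X := ⟨Classical.arbitrary (ℕ → X) 0⟩
  have hk : 0 < k := by
    by_contra h
    push_neg at h
    interval_cases k
    have := hA.cover
    simp at this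
    exact Set.empty_ne_univ this
  -- the marginal measure
  set ν : Measure X := Measure.map (fun x : ℕ → X => x 0) μ with hνdef
  haveI : IsProbabilityMeasure ν :=
    Measure.isProbabilityMeasure_map (measurable_pi_apply 0).aemeasurable
  have hν : ∀ B : Set X, MeasurableSet B → ν B = μ ((fun x : ℕ → X => x 0) ⁻¹' B) :=
    fun B hB => Measure.map_apply (measurable_pi_apply 0) hB
  refine ereal_le_of_forall_add_le fun ε hε => ?_
  -- continuity: choose δ
  have hcont : Continuous (fun t : ℝ => -phi (1 - t) - phi t + t * Real.log k) := by
    have hphi : Continuous phi := Real.continuous_mul_log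
    exact (((hphi.comp (continuous_const.sub continuous_id)).neg.sub hphi).add
      (continuous_id.mul continuous_const))
  have hc0 : (fun t : ℝ => -phi (1 - t) - phi t + t * Real.log k) 0 = 0 := by
    simp [phi]
  obtain ⟨δ, hδpos, hδ⟩ := Metric.continuousAt_iff.mp (hcont.continuousAt (x := 0)) ε hε
  -- choose compact (closed) approximations
  have hQex : ∀ i : Fin k, ∃ Q : Set X, Q ⊆ A i ∧ IsClosed Q ∧
      ν (A i \ Q) < ENNReal.ofReal (δ/2) / k := by
    intro i
    refine (hA.meas i).exists_isClosed_diff_lt (measure_ne_top ν _) ?_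
    simp only [ne_eq, ENNReal.div_eq_zero_iff]
    push_neg
    constructor
    · exact (ENNReal.ofReal_pos.mpr (by linarith)).ne'
    · exact ENNReal.natCast_ne_top k
  choose Q hQsub hQclosed hQlt using hQex
  have hQmeas : ∀ i, MeasurableSet (Q i) := fun i => (hQclosed i).measurableSet
  have hQd : Pairwise (Function.onFun Disjoint Q) :=
    fun i j hne => (hA.disj hne).mono (hQsub i) (hQsub j)
  set G : Set X := ⋃ i, Q i with hGdef
  have hGmeas : MeasurableSet G := MeasurableSet.iUnion fun i => hQmeas i
  -- bound on the measure of the complement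
  have hGlt : ν Gᶜ ≤ ENNReal.ofReal (δ/2) := by
    have hsub : Gᶜ ⊆ ⋃ i, (A i \ Q i) := by
      intro x hx
      have hxu : x ∈ ⋃ i, A i := hA.cover ▸ Set.mem_univ x
      obtain ⟨i, hi⟩ := Set.mem_iUnion.mp hxu
      refine Set.mem_iUnion.mpr ⟨i, hi, fun hQ => hx (Set.mem_iUnion.mpr ⟨i, hQ⟩)⟩
    calc ν Gᶜ ≤ ∑ i, ν (A i \ Q i) := by
          refine (measure_mono hsub).trans ?_
          exact (measure_iUnion_le _).trans_eq (tsum_fintype _)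
      _ ≤ ∑ _i : Fin k, ENNReal.ofReal (δ/2) / k :=
          Finset.sum_le_sum (fun i _ => (hQlt i).le)
      _ = ENNReal.ofReal (δ/2) := by
          rw [Finset.sum_const, Finset.card_univ, Fintype.card_fin, nsmul_eq_mul]
          exact ENNReal.mul_div_cancel (by exact_mod_cast hk.ne') (ENNReal.natCast_ne_top k)
  set t : ℝ := (ν Gᶜ).toReal with htdef
  have ht0 : 0 ≤ t := ENNReal.toReal_nonneg
  have htδ : t < δ := by
    have h2 : t ≤ δ/2 := by
      rw [htdef]
      exact ENNReal.toReal_le_of_le_ofReal (by linarith) hGlt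
    linarith
  have hcε : -phi (1 - t) - phi t + t * Real.log k < ε := by
    have h1 := hδ (x := t) (by rwa [Real.dist_eq, sub_zero, abs_of_nonneg ht0])
    have h2 : (-phi (1 - (0:ℝ)) - phi 0 + 0 * Real.log k) = 0 := by simp [phi]
    rw [h2, Real.dist_eq, sub_zero] at h1
    calc -phi (1 - t) - phi t + t * Real.log k
        ≤ |(-phi (1 - t) - phi t + t * Real.log k)| := le_abs_self _
      _ < ε := h1
  -- the refined partition and the pattern partition
  set Bf : Fin k × Bool → Set X := fun p => if p.2 then Q p.1 else A p.1 \ Q p.1 with hBfdef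
  have hBfm : ∀ p, MeasurableSet (Bf p) := by
    rintro ⟨i, b⟩
    cases b
    · simpa [hBfdef] using (hA.meas i).diff (hQmeas i)
    · simpa [hBfdef] using hQmeas i
  have hBfsubA : ∀ p, Bf p ⊆ A p.1 := by
    rintro ⟨i, b⟩
    cases b
    · simpa [hBfdef] using Set.diff_subset
    · simpa [hBfdef] using hQsub i
  have hBfd : Pairwise (Function.onFun Disjoint Bf) := by
    rintro ⟨i, b⟩ ⟨i', b'⟩ hne
    rcases eq_or_ne i i' with rfl | hii
    · have hbb : b ≠ b' := by
        intro h
        exact hne (by rw [h])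
      cases b
      · cases b'
        · exact absurd rfl hbb
        · simpa [hBfdef, Function.onFun] using
            (disjoint_sdiff_self_left : Disjoint (A i \ Q i) (Q i))
      · cases b'
        · simpa [hBfdef, Function.onFun] using
            (disjoint_sdiff_self_right : Disjoint (Q i) (A i \ Q i))
        · exact absurd rfl hbb
    · exact ((hA.disj hii).mono (hBfsubA _) (hBfsubA _))
  set ζ : Bool → Set X := fun b => if b then G else Gᶜ with hζdef
  have hζpart : IsPartition ζ := by
    refine ⟨?_, ?_, ?_⟩
    · intro b; cases b
      · simpa [hζdef] using hGmeas.compl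
      · simpa [hζdef] using hGmeas
    · rintro b b' hne
      cases b
      · cases b'
        · exact absurd rfl hne
        · simpa [hζdef, Function.onFun] using disjoint_compl_left
      · cases b'
        · simpa [hζdef, Function.onFun] using disjoint_compl_right
        · exact absurd rfl hne
    · ext x
      simp only [Set.mem_iUnion, Set.mem_univ, iff_true]
      by_cases hx : x ∈ G
      · exact ⟨true, by simpa [hζdef]⟩
      · exact ⟨false, by simpa [hζdef]⟩
  -- the open cover
  set UU : Fin k → Set X := fun j => (⋃ i ∈ Finset.univ.erase j, Q i)ᶜ with hUUdef
  set U : Set (Set X) := Set.range UU with hUdef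
  have hUopen : ∀ u ∈ U, IsOpen u := by
    rintro u ⟨j, rfl⟩
    exact (isClosed_biUnion_finset (fun i _ => hQclosed i)).isOpen_compl
  have hQdisUU : ∀ (a j : Fin k) (y : X), y ∈ Q a → y ∈ UU j → a = j := by
    intro a j y hya hyU
    by_contra hne
    exact hyU (Set.mem_biUnion (Finset.mem_erase.mpr ⟨hne, Finset.mem_univ a⟩) hya)
  have hUcover : ⋃₀ U = Set.univ := by
    ext x
    simp only [Set.mem_sUnion, Set.mem_univ, iff_true]
    by_cases hx : ∃ i, x ∈ Q i
    · obtain ⟨i, hi⟩ := hx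
      refine ⟨UU i, ⟨i, rfl⟩, fun hmem => ?_⟩
      obtain ⟨i', hi'⟩ := Set.mem_iUnion.mp hmem
      obtain ⟨hmem', hq⟩ := Set.mem_iUnion.mp hi'
      exact Set.disjoint_left.mp (hQd (Finset.mem_erase.mp hmem').1) hq hi
    · push_neg at hx
      refine ⟨UU ⟨0, hk⟩, ⟨⟨0, hk⟩, rfl⟩, fun hmem => ?_⟩
      obtain ⟨i'', hi''⟩ := Set.mem_iUnion.mp hmem
      obtain ⟨_, hq⟩ := Set.mem_iUnion.mp hi''
      exact hx i'' hq
  have hUmeas : ∀ u ∈ U, MeasurableSet u := fun u hu => (hUopen u hu).measurableSet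
  -- reduction lemmas for the if-then-else definitions
  have hBf_false : ∀ i : Fin k, Bf (i, false) = A i \ Q i := fun i => rfl
  have hBf_true : ∀ i : Fin k, Bf (i, true) = Q i := fun i => rfl
  have hζ_true : ζ true = G := rfl
  have hζ_false : ζ false = Gᶜ := rfl
  -- THE KEY ESTIMATE
  have hkey : ∀ n : ℕ, partEnt μ (cyl A n) ≤ Real.log (coverNum S U n) + n * ε := by
    intro n
    -- an optimal cover family exists
    have hNE : {m | ∃ F : Finset (Fin n → Set X), F.card = m ∧ (∀ w ∈ F, ∀ i, w i ∈ U) ∧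
        S ⊆ ⋃ w ∈ F, {x : ℕ → X | ∀ i : Fin n, x i ∈ w i}}.Nonempty := by
      refine ⟨(Finset.image (fun f : Fin n → Fin k => fun i => UU (f i)) Finset.univ).card,
        Finset.image (fun f : Fin n → Fin k => fun i => UU (f i)) Finset.univ, rfl, ?_, ?_⟩
      · intro w hw i
        obtain ⟨f, _, rfl⟩ := Finset.mem_image.mp hw
        exact ⟨f i, rfl⟩
      · intro x _
        have hex : ∀ i : Fin n, ∃ j : Fin k, x (i:ℕ) ∈ UU j := by
          intro i
          have hx : x (i:ℕ) ∈ ⋃₀ U := hUcover ▸ Set.mem_univ _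
          obtain ⟨u, ⟨j, rfl⟩, hu⟩ := hx
          exact ⟨j, hu⟩
        choose f hf using hex
        exact Set.mem_biUnion (Finset.mem_image.mpr ⟨f, Finset.mem_univ f, rfl⟩)
          (fun i => hf i)
    obtain ⟨F, hFcard, hFU, hFS⟩ := Nat.sInf_mem hNE
    set T : Set (ℕ → X) := ⋃ w ∈ F, {x : ℕ → X | ∀ i : Fin n, x i ∈ w i} with hTdef
    have hcylset : ∀ w : Fin n → Set X, {x : ℕ → X | ∀ i : Fin n, x i ∈ w i}
        = ⋂ i : Fin n, (fun x : ℕ → X => x (i:ℕ)) ⁻¹' w i := by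
      intro w; ext x; simp
    have hTmeas : MeasurableSet T := by
      refine Finset.measurableSet_biUnion F fun w hw => ?_
      rw [hcylset]
      exact MeasurableSet.iInter fun i => measurable_pi_apply _ (hUmeas _ (hFU w hw i))
    have hTopen : IsOpen T := by
      refine isOpen_biUnion fun w hw => ?_
      rw [hcylset]
      exact isOpen_iInter_of_finite fun i =>
        (hUopen _ (hFU w hw i)).preimage (continuous_apply (i:ℕ))
    have hTc0 : μ Tᶜ = 0 := by
      have hTcc : IsCompact Tᶜ := hTopen.isClosed_compl.isCompact
      have hW : ∀ x : (Tᶜ : Set (ℕ → X)), ∃ W : Set (ℕ → X),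
          IsOpen W ∧ (x : ℕ → X) ∈ W ∧ μ W = 0 := by
        rintro ⟨x, hx⟩
        have hxS : x ∉ S := fun h => hx (hFS h)
        have hxsupp : x ∉ {x : ℕ → X | ∀ U : Set (ℕ → X), IsOpen U → x ∈ U → μ U ≠ 0} :=
          fun h => hxS (hsupp h)
        simp only [Set.mem_setOf_eq] at hxsupp
        push_neg at hxsupp
        obtain ⟨W, hWo, hWx, hW0⟩ := hxsupp
        exact ⟨W, hWo, hWx, hW0⟩
      choose W hWo hWx hW0 using hW
      obtain ⟨fs, hfs⟩ := hTcc.elim_finite_subcover W hWo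
        (fun x hx => Set.mem_iUnion.mpr ⟨⟨x, hx⟩, hWx _⟩)
      have hle : μ Tᶜ ≤ ∑ x ∈ fs, μ (W x) :=
        (measure_mono hfs).trans (measure_biUnion_finset_le fs W)
      have h0 : μ Tᶜ ≤ 0 := by simpa [hW0] using hle
      exact le_antisymm h0 zero_le
    have hT1 : μ T = 1 := (prob_compl_eq_zero_iff hTmeas).mp hTc0
    have hFne : F.Nonempty := by
      rcases Finset.eq_empty_or_nonempty F with h | h
      · exfalso
        rw [hTdef, h] at hT1
        simp at hT1
      · exact h
    have hFpos : (0:ℝ) < F.card := by exact_mod_cast Finset.card_pos.mpr hFne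
    -- STEP 1: refine A-cylinders by Bf-cylinders
    have hex1 : ∀ (i : Fin k) (x : X), x ∈ A i → ∃ p : Fin k × Bool, p.1 = i ∧ x ∈ Bf p := by
      intro i x hx
      by_cases hq : x ∈ Q i
      · exact ⟨(i, true), rfl, by rw [hBf_true]; exact hq⟩
      · exact ⟨(i, false), rfl, by rw [hBf_false]; exact ⟨hx, hq⟩⟩
    have h1 : partEnt μ (cyl A n) ≤ partEnt μ (cyl Bf n) :=
      partEnt_le_refine μ (cyl A n) (cyl Bf n) (fun w' => Prod.fst ∘ w')
        (fun w => cyl_toReal_fiber μ Prod.fst A Bf hBfm hBfd hBfsubA hex1 n w)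
    -- STEP 2: compare with the pattern partition
    have hsub2 : ∀ p : Fin k × Bool, Bf p ⊆ ζ p.2 := by
      rintro ⟨i, b⟩
      cases b
      · rw [hBf_false, hζ_false]
        intro x hx hG
        rw [hGdef] at hG
        obtain ⟨j, hj⟩ := Set.mem_iUnion.mp hG
        rcases eq_or_ne j i with rfl | hne
        · exact hx.2 hj
        · exact Set.disjoint_left.mp (hA.disj hne) (hQsub j hj) hx.1
      · rw [hBf_true, hζ_true, hGdef]
        exact fun x hx => Set.mem_iUnion.mpr ⟨i, hx⟩
    have hex2 : ∀ (b : Bool) (x : X), x ∈ ζ b → ∃ p : Fin k × Bool, p.2 = b ∧ x ∈ Bf p := by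
      intro b x hx
      cases b
      · rw [hζ_false] at hx
        have hxu : x ∈ ⋃ i, A i := hA.cover ▸ Set.mem_univ x
        obtain ⟨i, hi⟩ := Set.mem_iUnion.mp hxu
        refine ⟨(i, false), rfl, ?_⟩
        rw [hBf_false]
        exact ⟨hi, fun hq => hx (by rw [hGdef]; exact Set.mem_iUnion.mpr ⟨i, hq⟩)⟩
      · rw [hζ_true, hGdef] at hx
        obtain ⟨i, hi⟩ := Set.mem_iUnion.mp hx
        exact ⟨(i, true), rfl, by rw [hBf_true]; exact hi⟩
    have hμC : ∀ z : Fin n → Bool, (μ (cyl ζ n z)).toReal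
        = ∑ w' ∈ Finset.univ.filter (fun w' : Fin n → Fin k × Bool => Prod.snd ∘ w' = z),
          (μ (cyl Bf n w')).toReal :=
      fun z => cyl_toReal_fiber μ Prod.snd ζ Bf hBfm hBfd hsub2 hex2 n z
    -- the counting function
    set cz : (Fin n → Bool) → ℕ :=
      fun z => (Finset.univ.filter (fun i : Fin n => z i = false)).card with hczdef
    set mfn : (Fin n → Bool) → ℝ := fun z => (F.card : ℝ) * (k : ℝ) ^ (cz z) with hmdef
    have hm1 : ∀ z, 1 ≤ mfn z := by
      intro z
      have h2 : (1:ℝ) ≤ (k:ℝ) ^ (cz z) := one_le_pow₀ (by exact_mod_cast hk)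
      have h3 : (1:ℝ) ≤ (F.card : ℝ) := by exact_mod_cast Finset.card_pos.mpr hFne
      show (1:ℝ) ≤ (F.card : ℝ) * (k:ℝ) ^ cz z
      nlinarith
    -- selection of a covering cylinder meeting each non-null cell
    have hsel : ∀ w' : Fin n → Fin k × Bool, (μ (cyl Bf n w')).toReal ≠ 0 →
        ∃ p : (Fin n → Set X) × (ℕ → X), p.1 ∈ F ∧ p.2 ∈ cyl Bf n w' ∧
          ∀ i : Fin n, p.2 (i:ℕ) ∈ p.1 i := by
      intro w' hw'
      have hμne : μ (cyl Bf n w') ≠ 0 := by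
        intro h; apply hw'; rw [h]; simp
      have hμ2 : μ (cyl Bf n w' ∩ T) ≠ 0 := by
        intro h
        apply hμne
        have hle : μ (cyl Bf n w') ≤ μ (cyl Bf n w' ∩ T) + μ (cyl Bf n w' \ T) :=
          measure_le_inter_add_diff μ _ T
        have hdiff : μ (cyl Bf n w' \ T) = 0 :=
          le_antisymm ((measure_mono (Set.diff_subset_compl _ _)).trans hTc0.le) zero_le
        rw [h, hdiff, add_zero] at hle
        exact le_antisymm hle zero_le
      obtain ⟨x, hx1, hx2⟩ := nonempty_of_measure_ne_zero hμ2
      rw [hTdef] at hx2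
      obtain ⟨w, hwF, hxw⟩ := Set.mem_iUnion₂.mp hx2
      exact ⟨(w, x), hwF, hx1, hxw⟩
    have hcount : ∀ z : Fin n → Bool, ∃ s' : Finset (Fin n → Fin k × Bool),
        s' ⊆ Finset.univ.filter (fun w' => Prod.snd ∘ w' = z) ∧
        (∀ w', Prod.snd ∘ w' = z → (μ (cyl Bf n w')).toReal ≠ 0 → w' ∈ s') ∧
        ((s'.card : ℝ) ≤ mfn z) := by
      intro z
      refine ⟨Finset.univ.filter (fun w' : Fin n → Fin k × Bool =>
        Prod.snd ∘ w' = z ∧ (μ (cyl Bf n w')).toReal ≠ 0), ?_, ?_, ?_⟩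
      · intro w' hw'
        rw [Finset.mem_filter] at hw' ⊢
        exact ⟨hw'.1, hw'.2.1⟩
      · intro w' ha hb
        rw [Finset.mem_filter]
        exact ⟨Finset.mem_univ _, ha, hb⟩
      · set s' := Finset.univ.filter (fun w' : Fin n → Fin k × Bool =>
          Prod.snd ∘ w' = z ∧ (μ (cyl Bf n w')).toReal ≠ 0) with hs'def
        set θ : (Fin n → Fin k × Bool) → (Fin n → Set X) × ({ i : Fin n // z i = false } → Fin k) :=
          fun w' => (if h : (μ (cyl Bf n w')).toReal ≠ 0 then (hsel w' h).choose.1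
                     else fun _ => (∅ : Set X),
                     fun i => (w' i.1).1) with hθdef
        have hmaps : ∀ w' ∈ s',
            θ w' ∈ F ×ˢ (Finset.univ : Finset ({ i : Fin n // z i = false } → Fin k)) := by
          intro w' hw'
          rw [hs'def, Finset.mem_filter] at hw'
          rw [Finset.mem_product]
          refine ⟨?_, Finset.mem_univ _⟩
          show (if h : (μ (cyl Bf n w')).toReal ≠ 0 then (hsel w' h).choose.1
              else fun _ => (∅ : Set X)) ∈ F
          rw [dif_pos hw'.2.2]
          exact (hsel w' hw'.2.2).choose_spec.1
        have hinj : Set.InjOn θ ↑s' := by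
          intro w1 h1 w2 h2 heq
          have h1' := Finset.mem_filter.mp (Finset.mem_coe.mp h1)
          have h2' := Finset.mem_filter.mp (Finset.mem_coe.mp h2)
          have hz1 := h1'.2.1
          have hne1 := h1'.2.2
          have hz2 := h2'.2.1
          have hne2 := h2'.2.2
          have hv : (hsel w1 hne1).choose.1 = (hsel w2 hne2).choose.1 := by
            have hfst := congrArg Prod.fst heq
            rw [hθdef] at hfst
            simpa only [dif_pos hne1, dif_pos hne2] using hfst
          have hrest : (fun i : { i : Fin n // z i = false } => (w1 i.1).1)
              = fun i => (w2 i.1).1 := congrArg Prod.snd heq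
          obtain ⟨hvF1, hx1cyl, hx1w⟩ := (hsel w1 hne1).choose_spec
          obtain ⟨hvF2, hx2cyl, hx2w⟩ := (hsel w2 hne2).choose_spec
          funext i
          have hb1 : (w1 i).2 = z i := congrFun hz1 i
          have hb2 : (w2 i).2 = z i := congrFun hz2 i
          cases hzi : z i with
          | false =>
            have hfi := congrFun hrest ⟨i, hzi⟩
            simp only at hfi
            refine Prod.ext hfi ?_
            rw [hb1, hb2]
          | true =>
            have hw1true : w1 i = ((w1 i).1, true) := by
              refine Prod.ext rfl ?_
              rw [hb1, hzi]
            have hw2true : w2 i = ((w2 i).1, true) := by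
              refine Prod.ext rfl ?_
              rw [hb2, hzi]
            have hxQ1 : (hsel w1 hne1).choose.2 (i:ℕ) ∈ Q (w1 i).1 := by
              have hmem := hx1cyl i
              rw [hw1true, hBf_true] at hmem
              exact hmem
            have hxQ2 : (hsel w2 hne2).choose.2 (i:ℕ) ∈ Q (w2 i).1 := by
              have hmem := hx2cyl i
              rw [hw2true, hBf_true] at hmem
              exact hmem
            obtain ⟨j, hj⟩ := hFU _ hvF1 i
            have e1 : (w1 i).1 = j := by
              refine hQdisUU _ _ _ hxQ1 ?_
              rw [hj]
              exact hx1w i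
            have e2 : (w2 i).1 = j := by
              refine hQdisUU _ _ _ hxQ2 ?_
              rw [hj, hv]
              exact hx2w i
            refine Prod.ext ?_ ?_
            · rw [e1, e2]
            · rw [hb1, hb2]
        have hcard := Finset.card_le_card_of_injOn θ hmaps hinj
        rw [Finset.card_product, Finset.card_univ] at hcard
        have hcfun : Fintype.card ({ i : Fin n // z i = false } → Fin k) = k ^ (cz z) := by
          rw [Fintype.card_fun, Fintype.card_fin, Fintype.card_subtype]
        rw [hcfun] at hcard
        show ((Finset.univ.filter (fun w' : Fin n → Fin k × Bool =>
          Prod.snd ∘ w' = z ∧ (μ (cyl Bf n w')).toReal ≠ 0)).card : ℝ)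
            ≤ (F.card : ℝ) * (k:ℝ) ^ (cz z)
        calc ((Finset.univ.filter (fun w' : Fin n → Fin k × Bool =>
            Prod.snd ∘ w' = z ∧ (μ (cyl Bf n w')).toReal ≠ 0)).card : ℝ)
            ≤ ((F.card * k ^ (cz z) : ℕ) : ℝ) := by exact_mod_cast hcard
          _ = (F.card : ℝ) * (k:ℝ) ^ (cz z) := by push_cast; ring
    have h2 : partEnt μ (cyl Bf n) ≤ partEnt μ (cyl ζ n)
        + ∑ z : Fin n → Bool, (μ (cyl ζ n z)).toReal * Real.log (mfn z) :=
      partEnt_le_count μ (cyl Bf n) (cyl ζ n) (fun w' => Prod.snd ∘ w') mfn hm1 hμC hcount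
    -- STEP 3: compute the penalty sum
    have hζcylpart : IsPartition (cyl ζ n) := cyl_partition hζpart n
    have hsum1 : ∑ z : Fin n → Bool, (μ (cyl ζ n z)).toReal = 1 :=
      partition_sum_one μ _ hζcylpart
    have hzfrac : ∀ i : Fin n,
        ∑ z ∈ Finset.univ.filter (fun z : Fin n → Bool => z i = false),
          (μ (cyl ζ n z)).toReal = t := by
      intro i
      have hun : (⋃ z ∈ Finset.univ.filter (fun z : Fin n → Bool => z i = false), cyl ζ n z)
          = (fun x : ℕ → X => x (i:ℕ)) ⁻¹' Gᶜ := by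
        ext x
        simp only [Set.mem_iUnion, Finset.mem_filter, Finset.mem_univ, true_and,
          Set.mem_preimage, exists_prop]
        constructor
        · rintro ⟨z, hzi, hx⟩
          have hxi := hx i
          rw [hzi] at hxi
          rwa [hζ_false] at hxi
        · intro hx
          refine ⟨fun j => if x (j:ℕ) ∈ G then true else false, ?_, ?_⟩
          · simp only [if_neg hx]
          · intro j
            by_cases hj : x (j:ℕ) ∈ G
            · simp only [if_pos hj]
              rw [hζ_true]
              exact hj
            · simp only [if_neg hj]
              rw [hζ_false]
              exact hj
      have hbi := meas_toReal_biUnion μ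
        (Finset.univ.filter fun z : Fin n → Bool => z i = false)
        (cyl ζ n) (fun z _ => measurable_cyl hζpart.meas n z)
        (fun z _ z' _ hne => cyl_disjoint hζpart.disj n hne)
      rw [hun] at hbi
      rw [← hbi, measure_eval_preimage μ hstat hGmeas.compl i, htdef, hν Gᶜ hGmeas.compl]
    have hsum2 : ∑ z : Fin n → Bool, (μ (cyl ζ n z)).toReal * (cz z : ℝ) = n * t := by
      have e1 : ∀ z : Fin n → Bool, (μ (cyl ζ n z)).toReal * (cz z : ℝ)
          = ∑ i ∈ Finset.univ.filter (fun i : Fin n => z i = false),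
              (μ (cyl ζ n z)).toReal := by
        intro z
        rw [Finset.sum_const, nsmul_eq_mul, mul_comm]
      rw [Finset.sum_congr rfl fun z _ => e1 z]
      rw [Finset.sum_congr rfl (fun z _ => Finset.sum_filter _ _)]
      rw [Finset.sum_comm]
      rw [Finset.sum_congr rfl (fun i _ => (Finset.sum_filter
        (fun z : Fin n → Bool => z i = false) _).symm)]
      rw [Finset.sum_congr rfl fun i _ => hzfrac i]
      rw [Finset.sum_const, Finset.card_univ, Fintype.card_fin, nsmul_eq_mul]
    have hlogm : ∑ z : Fin n → Bool, (μ (cyl ζ n z)).toReal * Real.log (mfn z)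
        = Real.log F.card + Real.log k * (n * t) := by
      have e1 : ∀ z : Fin n → Bool, Real.log (mfn z)
          = Real.log F.card + (cz z : ℝ) * Real.log k := by
        intro z
        show Real.log ((F.card : ℝ) * (k:ℝ) ^ (cz z)) = _
        rw [Real.log_mul hFpos.ne' (pow_ne_zero _ (by exact_mod_cast hk.ne')), Real.log_pow]
      rw [Finset.sum_congr rfl fun z _ => by rw [e1 z, mul_add]]
      rw [Finset.sum_add_distrib]
      congr 1
      · rw [← Finset.sum_mul, hsum1, one_mul]
      · calc ∑ z : Fin n → Bool, (μ (cyl ζ n z)).toReal * ((cz z : ℝ) * Real.log k)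
            = ∑ z : Fin n → Bool, ((μ (cyl ζ n z)).toReal * (cz z : ℝ)) * Real.log k := by
              refine Finset.sum_congr rfl fun z _ => ?_
              ring
          _ = (∑ z : Fin n → Bool, (μ (cyl ζ n z)).toReal * (cz z : ℝ)) * Real.log k := by
              rw [Finset.sum_mul]
          _ = Real.log k * (n * t) := by rw [hsum2]; ring
    -- STEP 4: entropy of the pattern partition
    have h4 : partEnt μ (cyl ζ n) ≤ n * (-phi (1 - t) - phi t) := by
      have hb := partEnt_cyl_le μ hstat ζ hζpart n
      have hfalseval : (μ ((fun x : ℕ → X => x 0) ⁻¹' ζ false)).toReal = t := by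
        rw [hζ_false, htdef, hν Gᶜ hGmeas.compl]
      have htrueval : (μ ((fun x : ℕ → X => x 0) ⁻¹' ζ true)).toReal = 1 - t := by
        have hpre : (fun x : ℕ → X => x 0) ⁻¹' ζ false
            = ((fun x : ℕ → X => x 0) ⁻¹' ζ true)ᶜ := by
          rw [hζ_true, hζ_false, Set.preimage_compl]
        have hc := measure_compl (μ := μ)
          ((measurable_pi_apply 0) (hζpart.meas true)) (measure_ne_top μ _)
        rw [← hpre] at hc
        have h5 : (μ ((fun x : ℕ → X => x 0) ⁻¹' ζ false)).toReal
            = 1 - (μ ((fun x : ℕ → X => x 0) ⁻¹' ζ true)).toReal := by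
          rw [hc, measure_univ,
            ENNReal.toReal_sub_of_le prob_le_one ENNReal.one_ne_top, ENNReal.toReal_one]
        rw [hfalseval] at h5
        linarith
      have he : partEnt μ (fun b : Bool => (fun x : ℕ → X => x 0) ⁻¹' ζ b)
          = -phi (1 - t) - phi t := by
        unfold partEnt
        rw [Fintype.sum_bool, htrueval, hfalseval]
        ring
      rw [he] at hb
      exact hb
    -- assemble
    have hfinal : partEnt μ (cyl A n) ≤ Real.log F.card + n * ε := by
      have c1 : partEnt μ (cyl A n) ≤ partEnt μ (cyl ζ n)
          + (Real.log F.card + Real.log k * (n * t)) := by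
        rw [← hlogm]
        exact h1.trans h2
      have c3 : (n:ℝ) * (-phi (1-t) - phi t) + Real.log k * (n*t) ≤ n * ε := by
        have hrw : (n:ℝ) * (-phi (1-t) - phi t) + Real.log k * (n * t)
            = n * (-phi (1-t) - phi t + t * Real.log k) := by ring
        rw [hrw]
        exact mul_le_mul_of_nonneg_left hcε.le (Nat.cast_nonneg n)
      linarith
    have hcovF : Real.log (coverNum S U n) = Real.log F.card := by
      rw [show (coverNum S U n) = F.card from hFcard.symm]
    rw [hcovF]
    exact hfinal
  -- pass to the limsup
  have hdiv : ∀ n : ℕ, 1 ≤ n →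
      partEnt μ (cyl A n) / n ≤ Real.log (coverNum S U n) / n + ε := by
    intro n hn
    have hn' : (0:ℝ) < n := by exact_mod_cast hn
    have hd : partEnt μ (cyl A n) / n ≤ (Real.log (coverNum S U n) + n * ε) / n := by
      gcongr
      exact hkey n
    rw [add_div, mul_comm, mul_div_assoc, div_self hn'.ne', mul_one] at hd
    exact hd
  have hlim : HsdP μ A ≤
      (limsup (fun n : ℕ => ((Real.log (coverNum S U n) / n : ℝ) : EReal)) atTop)
        + (ε : EReal) := by
    unfold HsdP
    refine le_trans (limsup_le_limsup ?_) (ereal_limsup_add_const _ ε)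
    filter_upwards [eventually_ge_atTop 1] with n hn
    have := hdiv n hn
    rw [show ((Real.log (coverNum S U n) / n : ℝ) : EReal) + (ε : EReal)
        = ((Real.log (coverNum S U n) / n + ε : ℝ) : EReal) from (EReal.coe_add _ _).symm]
    exact_mod_cast this
  refine hlim.trans (add_le_add_left ?_ (ε : EReal))
  unfold Htop
  exact le_iSup_of_le U (le_iSup_of_le ⟨hUopen, hUcover⟩ le_rfl)

end

/-- Variational Inequality: for `X` compact metrizable, `S ⊆ X^∞` arbitrary and
`μ` a stationary Borel probability measure with `supp(μ) ⊆ S`, `H^sd(μ) ≤ H^t(S)`. -/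
theorem variational_inequality {X : Type*} [TopologicalSpace X] [CompactSpace X]
    [TopologicalSpace.MetrizableSpace X] [MeasurableSpace X] [BorelSpace X]
    (μ : Measure (ℕ → X)) [IsProbabilityMeasure μ]
    (hstat : Measure.map shift μ = μ)
    (S : Set (ℕ → X))
    (hsupp : {x : ℕ → X | ∀ U : Set (ℕ → X), IsOpen U → x ∈ U → μ U ≠ 0} ⊆ S) :
    Hsd μ ≤ Htop S := by
  refine iSup_le fun k => iSup_le fun A => iSup_le fun hA => hsdp_le_htop μ hstat S hsupp A hA
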